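/- The function γ ↦ z_R(β*(γ), γ) = (1/γ)^{γ/(1-γ)} / ((1/γ)^{γ/(1-γ)} - γ + 1) is monotonically increasing on (0,1). -/

import Mathlib

open Real

noncomputable def zRstar (γ : ℝ) : ℝ :=
  (1 / γ) ^ (γ / (1 - γ)) / ((1 / γ) ^ (γ / (1 - γ)) - γ + 1)

noncomputable def auxH (γ : ℝ) : ℝ := Real.log (1 - γ) + γ / (1 - γ) * Real.log γ

lemma auxH_hasDerivAt {γ : ℝ} (hγ : γ ∈ Set.Ioo (0:ℝ) 1) :
    HasDerivAt auxH (Real.log γ / (1 - γ) ^ 2) γ := by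
  obtain ⟨h0, h1⟩ := hγ
  have h1' : (1:ℝ) - γ ≠ 0 := by linarith
  have h0' : γ ≠ 0 := ne_of_gt h0
  have d0 : HasDerivAt (fun x : ℝ => 1 - x) (0 - 1) γ :=
    (hasDerivAt_const γ 1).sub (hasDerivAt_id γ)
  have d1 : HasDerivAt (fun x : ℝ => Real.log (1 - x)) ((1 - γ)⁻¹ * (0 - 1)) γ :=
    (Real.hasDerivAt_log h1').comp γ d0
  have d2 : HasDerivAt (fun x : ℝ => x / (1 - x))
      ((1 * (1 - γ) - γ * (0 - 1)) / (1 - γ) ^ 2) γ :=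
    (hasDerivAt_id γ).div d0 h1'
  have d3 : HasDerivAt Real.log γ⁻¹ γ := Real.hasDerivAt_log h0'
  have d4 := d2.mul d3
  have d5 := d1.add d4
  refine HasDerivAt.congr_deriv (f := auxH) d5 ?_
  field_simp
  ring

lemma auxH_strictAnti : StrictAntiOn auxH (Set.Ioo (0:ℝ) 1) := by
  apply StrictAntiOn.mono (s := Set.Ioo (0:ℝ) 1) ?_ (le_refl _)
  apply strictAntiOn_of_deriv_neg (convex_Ioo 0 1)
  · intro x hx
    exact (auxH_hasDerivAt hx).continuousAt.continuousWithinAt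
  · intro x hx
    rw [interior_Ioo] at hx
    rw [(auxH_hasDerivAt hx).deriv]
    have hlog : Real.log x < 0 := Real.log_neg hx.1 hx.2
    have hsq : (0:ℝ) < (1 - x) ^ 2 := pow_pos (by linarith [hx.2]) 2
    exact div_neg_of_neg_of_pos hlog hsq

lemma zRstar_eq {γ : ℝ} (hγ : γ ∈ Set.Ioo (0:ℝ) 1) :
    zRstar γ = 1 / (1 + Real.exp (auxH γ)) := by
  obtain ⟨h0, h1⟩ := hγ
  have h1' : (0:ℝ) < 1 - γ := by linarith
  set c := γ / (1 - γ) with hc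
  have hb : (0:ℝ) < γ ^ c := Real.rpow_pos_of_pos h0 c
  have hexp : Real.exp (auxH γ) = (1 - γ) * γ ^ c := by
    rw [auxH, Real.exp_add, Real.exp_log h1', Real.rpow_def_of_pos h0, mul_comm c]
  have ha : (1 / γ : ℝ) ^ c = (γ ^ c)⁻¹ := by
    rw [one_div, Real.inv_rpow h0.le]
  rw [zRstar, hexp, ha]
  rw [div_eq_div_iff]
  · field_simp
    ring
  · have : (0:ℝ) < (γ ^ c)⁻¹ := by positivity
    linarith
  · positivity

theorem stmt12 : StrictMonoOn zRstar (Set.Ioo (0:ℝ) 1) := by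
  intro x hx y hy hxy
  rw [zRstar_eq hx, zRstar_eq hy]
  have h := auxH_strictAnti hx hy hxy
  have hex : Real.exp (auxH y) < Real.exp (auxH x) := Real.exp_lt_exp.mpr h
  have hpx : (0:ℝ) < 1 + Real.exp (auxH y) := by positivity
  apply one_div_lt_one_div_of_lt hpx
  linarith
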